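/- arXiv:2212.02932 — 2 statements merged into one kernel-verified Lean document; each statement's English description precedes it below -/
import Mathlib

section
/- Let X be a nonempty compact topological space, d ≥ 1, and let f_1, …, f_d : X → ℝ be continuous. Then the intersection of the argmax sets of the f_k is nonempty if and only if sup_{x ∈ X} Σ_{k=1}^d f_k(x) = Σ_{k=1}^d (sup_{x ∈ X} f_k(x)). -/
/-- Proposition 2 of the paper: On a nonempty compact space `X`, with
continuous `f_1, …, f_d : X → ℝ`, the intersection of the argmax sets of the `f k` is
nonempty iff `sup_x ∑ k, f k x = ∑ k, sup_x f k x`. -/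
theorem inter_argmax_nonempty_iff_sup_sum_eq_sum_sup
    {X : Type*} [TopologicalSpace X] [CompactSpace X] [Nonempty X]
    (d : ℕ) (hd : 1 ≤ d) (f : Fin d → X → ℝ) (hf : ∀ k : Fin d, Continuous (f k)) :
    (⋂ k : Fin d, {x : X | ∀ y : X, f k y ≤ f k x}).Nonempty ↔
      (⨆ x : X, ∑ k : Fin d, f k x) = ∑ k : Fin d, ⨆ x : X, f k x := by
  have hmax : ∀ k : Fin d, ∃ x : X, ∀ y : X, f k y ≤ f k x := by
    intro k
    obtain ⟨x, -, hx⟩ := isCompact_univ.exists_isMaxOn Set.univ_nonempty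
      (hf k).continuousOn
    exact ⟨x, fun y => hx (Set.mem_univ y)⟩
  have bdd : ∀ k : Fin d, BddAbove (Set.range (f k)) := by
    intro k
    obtain ⟨x, hx⟩ := hmax k
    exact ⟨f k x, by rintro _ ⟨y, rfl⟩; exact hx y⟩
  have hcs : Continuous (fun x : X => ∑ k : Fin d, f k x) :=
    continuous_finset_sum _ fun k _ => hf k
  obtain ⟨x0, -, hx0⟩ := isCompact_univ.exists_isMaxOn Set.univ_nonempty hcs.continuousOn
  have hx0' : ∀ y : X, ∑ k : Fin d, f k y ≤ ∑ k : Fin d, f k x0 :=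
    fun y => hx0 (Set.mem_univ y)
  have bdds : BddAbove (Set.range fun x : X => ∑ k : Fin d, f k x) :=
    ⟨∑ k : Fin d, f k x0, by rintro _ ⟨y, rfl⟩; exact hx0' y⟩
  constructor
  · rintro ⟨x, hx⟩
    simp only [Set.mem_iInter, Set.mem_setOf_eq] at hx
    have hsup : ∀ k : Fin d, (⨆ x : X, f k x) = f k x :=
      fun k => le_antisymm (ciSup_le (hx k)) (le_ciSup (bdd k) x)
    apply le_antisymm
    · exact ciSup_le fun y => Finset.sum_le_sum fun k _ => le_ciSup (bdd k) y
    · calc ∑ k : Fin d, ⨆ x : X, f k x = ∑ k : Fin d, f k x := by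
            exact Finset.sum_congr rfl fun k _ => hsup k
        _ ≤ ⨆ x : X, ∑ k : Fin d, f k x := le_ciSup bdds x
  · intro h
    have hsup_eq : (⨆ x : X, ∑ k : Fin d, f k x) = ∑ k : Fin d, f k x0 :=
      le_antisymm (ciSup_le hx0') (le_ciSup bdds x0)
    have hsum : ∑ k : Fin d, f k x0 = ∑ k : Fin d, ⨆ x : X, f k x := by
      rw [← hsup_eq, h]
    have hle : ∀ k ∈ Finset.univ, f k x0 ≤ ⨆ x : X, f k x :=
      fun k _ => le_ciSup (bdd k) x0
    have heq : ∀ k ∈ Finset.univ, f k x0 = ⨆ x : X, f k x :=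
      fun k hk => (Finset.sum_eq_sum_iff_of_le hle).mp hsum k hk
    refine ⟨x0, Set.mem_iInter.mpr fun k y => ?_⟩
    have := heq k (Finset.mem_univ k)
    calc f k y ≤ ⨆ x : X, f k x := le_ciSup (bdd k) y
      _ = f k x0 := this.symm
end

section
/- Let X be a nonempty compact topological space, d ≥ 1, and let f_1, …, f_d : X → ℝ be continuous. Then the intersection of the argmax sets of the f_k is empty if and only if sup_{x ∈ X} Σ_{k=1}^d f_k(x) < Σ_{k=1}^d (sup_{x ∈ X} f_k(x)), i.e., the global maximum of the sum is strictly smaller than the sum of the global maxima. -/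
/-- Corollary 3 of the paper: On a nonempty compact space `X`, with
continuous `f_1, …, f_d : X → ℝ`, the intersection of the argmax sets of the `f k` is
empty iff `sup_x ∑ k, f k x < ∑ k, sup_x f k x`. -/
theorem inter_argmax_empty_iff_sup_sum_lt_sum_sup
    {X : Type*} [TopologicalSpace X] [CompactSpace X] [Nonempty X]
    (d : ℕ) (hd : 1 ≤ d) (f : Fin d → X → ℝ) (hf : ∀ k : Fin d, Continuous (f k)) :
    (⋂ k : Fin d, {x : X | ∀ y : X, f k y ≤ f k x}) = ∅ ↔
      (⨆ x : X, ∑ k : Fin d, f k x) < ∑ k : Fin d, ⨆ x : X, f k x := by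
  have bdd : ∀ k : Fin d, BddAbove (Set.range (f k)) := fun k =>
    (isCompact_range (hf k)).bddAbove
  have hsum : Continuous fun x : X => ∑ k : Fin d, f k x :=
    continuous_finset_sum _ fun k _ => hf k
  have bddS : BddAbove (Set.range fun x : X => ∑ k : Fin d, f k x) :=
    (isCompact_range hsum).bddAbove
  have hle : (⨆ x : X, ∑ k : Fin d, f k x) ≤ ∑ k : Fin d, ⨆ x : X, f k x :=
    ciSup_le fun x => Finset.sum_le_sum fun k _ => le_ciSup (bdd k) x
  constructor
  · intro hempty
    rcases lt_or_eq_of_le hle with h | h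
    · exact h
    · exfalso
      obtain ⟨x0, hx0⟩ := hsum.exists_forall_ge
        (by rw [Filter.cocompact_eq_bot]; exact Filter.tendsto_bot)
      have hsup : (⨆ x : X, ∑ k : Fin d, f k x) = ∑ k : Fin d, f k x0 :=
        le_antisymm (ciSup_le hx0) (le_ciSup bddS x0)
      have heach : ∀ k : Fin d, f k x0 = ⨆ x : X, f k x := by
        by_contra hne
        push_neg at hne
        obtain ⟨k0, hk0⟩ := hne
        have hk0' : f k0 x0 < ⨆ x : X, f k0 x :=
          lt_of_le_of_ne (le_ciSup (bdd k0) x0) hk0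
        have : ∑ k : Fin d, f k x0 < ∑ k : Fin d, ⨆ x : X, f k x :=
          Finset.sum_lt_sum (fun k _ => le_ciSup (bdd k) x0)
            ⟨k0, Finset.mem_univ k0, hk0'⟩
        rw [← hsup, h] at this
        exact lt_irrefl _ this
      have : x0 ∈ ⋂ k : Fin d, {x : X | ∀ y : X, f k y ≤ f k x} := by
        refine Set.mem_iInter.2 fun k y => ?_
        rw [heach k]
        exact le_ciSup (bdd k) y
      rw [hempty] at this
      exact this
  · intro hlt
    rw [Set.eq_empty_iff_forall_notMem]
    intro x hx
    have hx' := Set.mem_iInter.1 hx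
    have heq : ∀ k : Fin d, (⨆ y : X, f k y) = f k x := fun k =>
      le_antisymm (ciSup_le (hx' k)) (le_ciSup (bdd k) x)
    have : ∑ k : Fin d, ⨆ y : X, f k y ≤ ⨆ y : X, ∑ k : Fin d, f k y := by
      calc ∑ k : Fin d, ⨆ y : X, f k y = ∑ k : Fin d, f k x := by
            simp [heq]
        _ ≤ ⨆ y : X, ∑ k : Fin d, f k y := le_ciSup bddS x
    exact absurd hlt (not_lt.2 this)
end
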